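/- Let Q = 𝒬(G,H,f) be a coset quandle over a finite group G, where H ≤ Fix(f). If |H| and the order of f are coprime, then for every x ∈ G the size of the orbit of xH under left multiplication by H in Q equals the length of the orbit of x under f. -/

import Mathlib

/-- Key injectivity step: if two orbit points lie in the same coset, they are equal. -/
lemma stmt7_aux {G : Type*} [Group G] [Finite G] (f : MulAut G) (H : Subgroup G)
    (hH : ∀ h ∈ H, f h = h)
    (hco : Nat.Coprime (Nat.card H) (orderOf f)) (x : G) (a c : ℕ)
    (hab : (QuotientGroup.mk ((f ^ a) x) : G ⧸ H) = QuotientGroup.mk ((f ^ (a + c)) x)) :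
    (f ^ a) x = (f ^ (a + c)) x := by
  rw [QuotientGroup.eq] at hab
  set h : G := ((f ^ a) x)⁻¹ * (f ^ (a + c)) x with hh
  have hmem : h ∈ H := hab
  have hfix : ∀ k : ℕ, (f ^ k) h = h := by
    intro k
    induction k with
    | zero => rfl
    | succ n ih => rw [pow_succ, MulAut.mul_apply, hH h hmem]; exact ih
  have hstep : ∀ k : ℕ, (f ^ (a + k + c)) x = (f ^ (a + k)) x * h := by
    intro k
    have h0 : (f ^ (a + c)) x = (f ^ a) x * h := by
      rw [hh, mul_inv_cancel_left]
    have := congrArg (f ^ k) h0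
    rw [map_mul, hfix k] at this
    calc (f ^ (a + k + c)) x = (f ^ k) ((f ^ (a + c)) x) := by
          rw [← MulAut.mul_apply, ← pow_add]; ring_nf
      _ = (f ^ k) ((f ^ a) x) * h := this
      _ = (f ^ (a + k)) x * h := by
          rw [← MulAut.mul_apply, ← pow_add]; ring_nf
  have key : ∀ j : ℕ, (f ^ (a + j * c)) x = (f ^ a) x * h ^ j := by
    intro j
    induction j with
    | zero => simp
    | succ n ih =>
        have := hstep (n * c)
        rw [ih] at this
        calc (f ^ (a + (n + 1) * c)) x = (f ^ (a + n * c + c)) x := by ring_nf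
          _ = (f ^ a) x * h ^ n * h := this
          _ = (f ^ a) x * h ^ (n + 1) := by rw [mul_assoc, pow_succ]
  have hm := key (orderOf f)
  have hpow : (f ^ (a + orderOf f * c)) x = (f ^ a) x := by
    rw [pow_add, pow_mul, pow_orderOf_eq_one, one_pow, mul_one]
  rw [hpow] at hm
  have hpow1 : h ^ orderOf f = 1 := mul_eq_left.mp hm.symm
  have hd1 : orderOf h ∣ orderOf f := orderOf_dvd_of_pow_eq_one hpow1
  have hd2 : orderOf h ∣ Nat.card H := by
    have : orderOf (⟨h, hmem⟩ : H) ∣ Nat.card H := orderOf_dvd_natCard _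
    rwa [Subgroup.orderOf_mk] at this
  have h1 : orderOf h = 1 := Nat.eq_one_of_dvd_one (hco ▸ Nat.dvd_gcd hd2 hd1)
  have : h = 1 := orderOf_eq_one_iff.mp h1
  rw [hh] at this
  exact eq_of_inv_mul_eq_one this

theorem stmt7 {G : Type*} [Group G] [Finite G] (f : MulAut G) (H : Subgroup G)
    (hH : ∀ h ∈ H, f h = h)
    (hco : Nat.Coprime (Nat.card H) (orderOf f)) (x : G) :
    Nat.card (Set.range fun n : ℕ => (f ^ n) x) =
      Nat.card (Set.range fun n : ℕ => (QuotientGroup.mk ((f ^ n) x) : G ⧸ H)) := by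
  have hrange : (Set.range fun n : ℕ => (QuotientGroup.mk ((f ^ n) x) : G ⧸ H)) =
      (QuotientGroup.mk : G → G ⧸ H) '' (Set.range fun n : ℕ => (f ^ n) x) := by
    rw [← Set.range_comp]; rfl
  have hinj : Set.InjOn (QuotientGroup.mk : G → G ⧸ H)
      (Set.range fun n : ℕ => (f ^ n) x) := by
    rintro _ ⟨a, rfl⟩ _ ⟨b, rfl⟩ hab
    rcases le_total a b with hle | hle
    · obtain ⟨c, rfl⟩ := Nat.exists_eq_add_of_le hle
      exact stmt7_aux f H hH hco x a c hab
    · obtain ⟨c, rfl⟩ := Nat.exists_eq_add_of_le hle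
      exact (stmt7_aux f H hH hco x b c hab.symm).symm
  rw [hrange, Nat.card_coe_set_eq, Nat.card_coe_set_eq,
    Set.ncard_image_of_injOn hinj]
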